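/- Let K ⊆ ℝ^2 be a closed, convex, unbounded set with non-empty interior. If K contains a point of ℤ^2, then K ∩ ℤ^2 is infinite. -/

import Mathlib

lemma exists_ray {K : Set (Fin 2 → ℝ)} (hKc : IsClosed K) (hKconv : Convex ℝ K)
    (hKunb : ¬ Bornology.IsBounded K) {p : Fin 2 → ℝ} (hp : p ∈ K) :
    ∃ v : Fin 2 → ℝ, ‖v‖ = 1 ∧ ∀ t : ℝ, 0 ≤ t → p + t • v ∈ K := by
  have hy : ∀ n : ℕ, ∃ y ∈ K, (n : ℝ) < ‖y - p‖ := by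
    intro n
    by_contra h
    push_neg at h
    apply hKunb
    rw [Metric.isBounded_iff_subset_closedBall p]
    exact ⟨n, fun y hy => by
      simpa [Metric.mem_closedBall, dist_eq_norm] using h y hy⟩
  choose y hyK hyn using hy
  have hy0 : ∀ n, y n - p ≠ 0 := by
    intro n h
    have := hyn n
    rw [h, norm_zero] at this
    exact absurd this (not_lt.mpr (by positivity))
  set u : ℕ → (Fin 2 → ℝ) := fun n => ‖y n - p‖⁻¹ • (y n - p) with hu
  have hun : ∀ n, u n ∈ Metric.sphere (0 : Fin 2 → ℝ) 1 := by
    intro n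
    simp only [Metric.mem_sphere, dist_zero_right, hu, norm_smul, norm_inv, norm_norm]
    rw [inv_mul_cancel₀ (norm_ne_zero_iff.mpr (hy0 n))]
  obtain ⟨v, hv, φ, hφ, hvt⟩ := (isCompact_sphere (0 : Fin 2 → ℝ) 1).tendsto_subseq hun
  refine ⟨v, by simpa [dist_zero_right] using hv, fun t ht => ?_⟩
  have hmem : ∀ᶠ n in Filter.atTop, p + t • u (φ n) ∈ K := by
    filter_upwards [Filter.eventually_ge_atTop ⌈t⌉₊] with n hn
    have hle : t ≤ ‖y (φ n) - p‖ := by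
      calc t ≤ (⌈t⌉₊ : ℝ) := Nat.le_ceil t
        _ ≤ (n : ℝ) := by exact_mod_cast hn
        _ ≤ (φ n : ℝ) := by exact_mod_cast hφ.id_le n
        _ ≤ ‖y (φ n) - p‖ := (hyn (φ n)).le
    set s : ℝ := t * ‖y (φ n) - p‖⁻¹ with hs
    have hnorm_pos : 0 < ‖y (φ n) - p‖ := norm_pos_iff.mpr (hy0 (φ n))
    have hs0 : 0 ≤ s := by positivity
    have hs1 : s ≤ 1 := by
      rw [hs, mul_inv_le_iff₀ hnorm_pos, one_mul]; exact hle
    have : p + t • u (φ n) = (1 - s) • p + s • y (φ n) := by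
      simp only [hu, smul_smul, ← hs, smul_sub, sub_smul, one_smul]
      abel
    rw [this]
    exact hKconv hp (hyK (φ n)) (by linarith) hs0 (by ring)
  refine hKc.mem_of_tendsto ?_ hmem
  exact Filter.Tendsto.const_add p ((hvt.const_smul t))

lemma recession_mem {K : Set (Fin 2 → ℝ)} (hKc : IsClosed K) (hKconv : Convex ℝ K)
    {p v : Fin 2 → ℝ} (hray : ∀ t : ℝ, 0 ≤ t → p + t • v ∈ K)
    {x : Fin 2 → ℝ} (hx : x ∈ K) {t : ℝ} (ht : 0 ≤ t) : x + t • v ∈ K := by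
  rcases eq_or_lt_of_le ht with h | htpos
  · simpa [← h] using hx
  set z : ℕ → (Fin 2 → ℝ) := fun n => x + (t / (t + n + 1)) • (p - x) + t • v with hz
  have hmem : ∀ n, z n ∈ K := by
    intro n
    have hd : (0:ℝ) < t + n + 1 := by positivity
    set s : ℝ := t / (t + n + 1) with hs
    have hs0 : 0 ≤ s := by positivity
    have hs1 : s ≤ 1 := by
      rw [hs, div_le_one hd]; linarith [Nat.cast_nonneg (α := ℝ) n]
    have key : z n = (1 - s) • x + s • (p + (t + n + 1) • v) := by
      have hst : s * (t + n + 1) = t := by rw [hs]; field_simp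
      clear_value s
      funext i
      simp only [hz, Pi.add_apply, Pi.smul_apply, Pi.sub_apply, smul_eq_mul]
      rw [← hs]
      linear_combination (-(v i)) * hst
    rw [key]
    exact hKconv hx (hray (t + n + 1) (by positivity)) (by linarith) hs0 (by ring)
  have h1 : Filter.Tendsto (fun n : ℕ => t / (t + n + 1)) Filter.atTop (nhds 0) := by
    apply Filter.Tendsto.div_atTop tendsto_const_nhds
    apply Filter.tendsto_atTop_add_const_right
    exact Filter.tendsto_atTop_add_const_left _ _ tendsto_natCast_atTop_atTop
  have h2 : Filter.Tendsto z Filter.atTop (nhds (x + (0:ℝ) • (p - x) + t • v)) := by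
    exact ((tendsto_const_nhds.add ((h1.smul_const (p-x)))).add tendsto_const_nhds)
  exact hKc.mem_of_tendsto (by simpa using h2) (Filter.Eventually.of_forall hmem)

lemma irrational_small_step {α : ℝ} (hα : Irrational α) {ε : ℝ} (hε : 0 < ε) :
    ∃ (m : ℕ) (j : ℤ), 0 < m ∧ (m : ℝ) * α - j ≠ 0 ∧ |(m : ℝ) * α - j| < ε := by
  set S : AddSubgroup ℝ := AddSubgroup.closure {1, α} with hS
  have hdense : Dense (S : Set ℝ) := by
    rcases S.dense_or_cyclic with h | ⟨a, ha⟩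
    · exact h
    · exfalso
      have h1 : (1 : ℝ) ∈ S := AddSubgroup.subset_closure (by simp)
      have hα' : α ∈ S := AddSubgroup.subset_closure (by simp)
      rw [ha, AddSubgroup.mem_closure_singleton] at h1 hα'
      obtain ⟨m, hm⟩ := h1
      obtain ⟨n, hn⟩ := hα'
      have hm' : (m : ℝ) * a = 1 := by rw [← hm]; simp [zsmul_eq_mul]
      have hn' : (n : ℝ) * a = α := by rw [← hn]; simp [zsmul_eq_mul]
      have hm0 : (m : ℝ) ≠ 0 := by
        intro h; rw [h, zero_mul] at hm'; exact one_ne_zero hm'.symm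
      refine hα ⟨(n : ℚ) / (m : ℚ), ?_⟩
      push_cast
      rw [div_eq_iff hm0]
      linear_combination (m : ℝ) * hn' + (-(n : ℝ)) * hm'
  obtain ⟨s, hsS, hs0, hs1⟩ :
      ∃ s ∈ (S : Set ℝ), 0 < s ∧ s < min ε 1 := by
    obtain ⟨s, hs1, hs2⟩ := hdense.exists_mem_open (isOpen_Ioo (a := (0:ℝ)) (b := min ε 1))
      (Set.nonempty_Ioo.mpr (lt_min hε one_pos))
    exact ⟨s, hs1, hs2.1, hs2.2⟩
  rw [hS, SetLike.mem_coe, AddSubgroup.mem_closure_pair] at hsS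
  obtain ⟨a, b, hab⟩ := hsS
  have habs' : (b : ℝ) * α - ((-a : ℤ) : ℝ) = s := by
    rw [← hab]; push_cast [zsmul_eq_mul]; ring
  have hb0 : b ≠ 0 := by
    rintro rfl
    rw [Int.cast_zero, zero_mul, zero_sub, Int.cast_neg, neg_neg] at habs'
    have h1 : (0:ℝ) < (a:ℝ) := habs' ▸ hs0
    have h2 : (a:ℝ) < 1 := habs' ▸ lt_of_lt_of_le hs1 (min_le_right _ _)
    have : (0:ℤ) < a := by exact_mod_cast h1
    have : (1:ℝ) ≤ (a:ℝ) := by exact_mod_cast this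
    linarith
  have hsε : s < ε := lt_of_lt_of_le hs1 (min_le_left _ _)
  rcases lt_or_gt_of_ne hb0 with hbneg | hbpos
  · have hcast : (((-b).toNat : ℕ) : ℝ) = -(b : ℝ) := by
      exact_mod_cast Int.toNat_of_nonneg (by omega : (0:ℤ) ≤ -b)
    refine ⟨(-b).toNat, a, by omega, ?_, ?_⟩
    · rw [hcast]
      intro h
      have : (b:ℝ) * α - ((-a : ℤ) : ℝ) = -(-(b:ℝ) * α - (a:ℤ)) := by push_cast; ring
      rw [this, h, neg_zero] at habs'
      exact absurd habs'.symm (ne_of_gt hs0)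
    · rw [hcast]
      have : -(b:ℝ) * α - ((a:ℤ):ℝ) = -((b:ℝ) * α - ((-a : ℤ):ℝ)) := by push_cast; ring
      rw [this, abs_neg, habs', abs_of_pos hs0]
      exact hsε
  · have hcast : ((b.toNat : ℕ) : ℝ) = (b : ℝ) := by
      exact_mod_cast Int.toNat_of_nonneg (by omega : (0:ℤ) ≤ b)
    refine ⟨b.toNat, -a, by omega, ?_, ?_⟩
    · rw [hcast, habs']; exact ne_of_gt hs0
    · rw [hcast, habs', abs_of_pos hs0]; exact hsε

lemma walk_pos {β γ : ℝ} (hγ : 0 < γ) (N : ℕ) :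
    ∃ (k : ℕ) (M : ℤ), N ≤ k ∧ |β + k * γ - M| < γ := by
  set M : ℤ := ⌊β + N * γ⌋ + 1 with hM
  have hMgt : β + N * γ < M := by
    rw [hM]; push_cast; linarith [Int.lt_floor_add_one (β + N * γ)]
  set x : ℝ := ((M : ℝ) - β) / γ with hx
  have hxN : (N : ℝ) < x := by
    rw [hx, lt_div_iff₀ hγ]; linarith
  set k : ℕ := ⌈x⌉₊ with hk
  have hkx : x ≤ (k : ℝ) := Nat.le_ceil x
  have hkx' : (k : ℝ) - 1 < x := by
    have := Nat.ceil_lt_add_one (le_of_lt (lt_of_le_of_lt (Nat.cast_nonneg N) hxN))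
    rw [← hk] at this
    linarith
  have h1 : (M : ℝ) ≤ β + k * γ := by
    rw [hx, div_le_iff₀ hγ] at hkx; linarith
  have h3 : ((k:ℝ) - 1) * γ < (M:ℝ) - β := by
    rw [hx, lt_div_iff₀ hγ] at hkx'; linarith
  refine ⟨k, M, ?_, ?_⟩
  · exact_mod_cast (lt_of_lt_of_le hxN hkx).le
  · rw [abs_of_nonneg (by linarith)]
    nlinarith
lemma walk_any {β γ : ℝ} (hγ : γ ≠ 0) (N : ℕ) :
    ∃ (k : ℕ) (M : ℤ), N ≤ k ∧ |β + k * γ - M| < |γ| := by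
  rcases hγ.lt_or_gt with h | h
  · obtain ⟨k, M, hk, hM⟩ := walk_pos (β := -β) (γ := -γ) (neg_pos.mpr h) N
    refine ⟨k, -M, hk, ?_⟩
    rw [abs_of_neg h]
    have : β + (k:ℝ) * γ - ((-M : ℤ) : ℝ) = -(-β + (k:ℝ) * -γ - (M:ℝ)) := by push_cast; ring
    rw [this, abs_neg]
    exact hM
  · obtain ⟨k, M, hk, hM⟩ := walk_pos (β := β) h N
    exact ⟨k, M, hk, by rwa [abs_of_pos h]⟩

lemma rat_or_irrat (v : Fin 2 → ℝ) (hv : v ≠ 0) :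
    (∃ (w : Fin 2 → ℤ) (s : ℝ), 0 < s ∧ (∀ i, (w i : ℝ) = s * v i) ∧ w ≠ 0) ∨
    (v 0 ≠ 0 ∧ Irrational (v 1 / v 0)) := by
  by_cases h0 : v 0 = 0
  · left
    have h1 : v 1 ≠ 0 := by
      intro h1
      apply hv
      funext i
      fin_cases i <;> simp [h0, h1]
    rcases h1.lt_or_gt with hneg | hpos
    · refine ⟨![0, -1], 1 / (-v 1), div_pos one_pos (by linarith), ?_, ?_⟩
      · intro i
        fin_cases i
        · simp [h0]
        · show ((-1 : ℤ) : ℝ) = 1 / (-v 1) * v 1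
          rw [div_mul_eq_mul_div, eq_div_iff (by linarith : -v 1 ≠ 0)]
          push_cast; ring
      · intro h
        have := congrFun h 1
        simp at this
    · refine ⟨![0, 1], 1 / v 1, div_pos one_pos hpos, ?_, ?_⟩
      · intro i
        fin_cases i
        · simp [h0]
        · show ((1 : ℤ) : ℝ) = 1 / v 1 * v 1
          rw [div_mul_eq_mul_div, eq_div_iff h1]
          push_cast; ring
      · intro h
        have := congrFun h 1
        simp at this
  · by_cases hirr : Irrational (v 1 / v 0)
    · exact Or.inr ⟨h0, hirr⟩
    · left
      rw [Irrational] at hirr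
      push_neg at hirr
      obtain ⟨q, hq⟩ := hirr
      have hden : ((q.den : ℝ)) ≠ 0 := by
        exact_mod_cast q.den_nz
      have hnum : (q.num : ℝ) = (q : ℝ) * (q.den : ℝ) := by
        rw [Rat.cast_def]; field_simp
      have hv1 : v 1 = (q : ℝ) * v 0 := by
        field_simp at hq
        linarith [hq]
      rcases lt_or_gt_of_ne h0 with hneg | hpos
      · refine ⟨![-(q.den : ℤ), -q.num], (q.den : ℝ) / (-v 0), div_pos
          (by exact_mod_cast q.pos) (by linarith), ?_, ?_⟩
        · intro i
          fin_cases i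
          · show ((-(q.den : ℤ) : ℤ) : ℝ) = (q.den : ℝ) / (-v 0) * v 0
            rw [div_mul_eq_mul_div, eq_div_iff (by linarith : -v 0 ≠ 0)]
            push_cast; ring
          · show ((-q.num : ℤ) : ℝ) = (q.den : ℝ) / (-v 0) * v 1
            rw [hv1, div_mul_eq_mul_div, eq_div_iff (by linarith : -v 0 ≠ 0)]
            push_cast
            rw [hnum]; ring
        · intro h
          have := congrFun h 0
          simp at this
      · refine ⟨![(q.den : ℤ), q.num], (q.den : ℝ) / v 0, div_pos
          (by exact_mod_cast q.pos) hpos, ?_, ?_⟩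
        · intro i
          fin_cases i
          · show (((q.den : ℤ) : ℤ) : ℝ) = (q.den : ℝ) / v 0 * v 0
            rw [div_mul_eq_mul_div, eq_div_iff h0]
            push_cast; ring
          · show ((q.num : ℤ) : ℝ) = (q.den : ℝ) / v 0 * v 1
            rw [hv1, div_mul_eq_mul_div, eq_div_iff h0]
            rw [hnum]; ring
        · intro h
          have := congrFun h 0
          simp [q.den_nz] at this

/-- If `K ⊆ ℝ²` is closed, convex, unbounded, with non-empty interior, and `K`
contains a lattice point, then `K ∩ ℤ²` is infinite. -/
theorem lattice_infinite_dim2 (K : Set (Fin 2 → ℝ))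
    (hKc : IsClosed K) (hKconv : Convex ℝ K) (hKunb : ¬ Bornology.IsBounded K)
    (hKint : (interior K).Nonempty)
    (hlat : ∃ x ∈ K, ∀ i, ∃ m : ℤ, x i = (m : ℝ)) :
    {x ∈ K | ∀ i, ∃ m : ℤ, x i = (m : ℝ)}.Infinite := by
  obtain ⟨x₀, hx₀K, hx₀lat⟩ := hlat
  obtain ⟨c, hcK⟩ := hKint
  obtain ⟨r, hr, hball⟩ := Metric.isOpen_iff.mp isOpen_interior c hcK
  have hballK : Metric.ball c r ⊆ K := hball.trans interior_subset
  obtain ⟨v, hvnorm, hray⟩ := exists_ray hKc hKconv hKunb hx₀K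
  have hvne : v ≠ 0 := fun h => by simp [h] at hvnorm
  set S := {x ∈ K | ∀ i, ∃ m : ℤ, x i = (m : ℝ)} with hSdef
  suffices h : ∀ R : ℝ, ∃ z ∈ S, R < ‖z‖ by
    by_contra hfin
    rw [Set.not_infinite] at hfin
    obtain ⟨R, hsub⟩ := (Metric.isBounded_iff_subset_closedBall 0).mp hfin.isBounded
    obtain ⟨z, hzS, hzR⟩ := h R
    have := hsub hzS
    rw [Metric.mem_closedBall, dist_zero_right] at this
    linarith
  intro R
  rcases rat_or_irrat v hvne with ⟨w, s, hs, hws, hwne⟩ | ⟨h00, hirr⟩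
  · -- rational direction case
    obtain ⟨i₀, hi₀⟩ := Function.ne_iff.mp hwne
    have hwi₀ : (1 : ℝ) ≤ |((w i₀ : ℤ) : ℝ)| := by
      have : (1 : ℤ) ≤ |w i₀| := Int.one_le_abs hi₀
      calc (1:ℝ) ≤ ((|w i₀| : ℤ) : ℝ) := by exact_mod_cast this
        _ = |((w i₀ : ℤ) : ℝ)| := by push_cast; ring
    obtain ⟨n, hn⟩ := exists_nat_gt (R + |x₀ i₀|)
    set z : Fin 2 → ℝ := x₀ + ((n : ℝ) * s) • v with hz
    have hzK : z ∈ K := hray _ (by positivity)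
    have hzcoord : ∀ i, z i = x₀ i + (n : ℝ) * ((w i : ℤ) : ℝ) := by
      intro i
      rw [hz]
      simp only [Pi.add_apply, Pi.smul_apply, smul_eq_mul]
      rw [hws i]; ring
    refine ⟨z, ⟨hzK, fun i => ?_⟩, ?_⟩
    · obtain ⟨m, hm⟩ := hx₀lat i
      exact ⟨m + n * w i, by rw [hzcoord i, hm]; push_cast; ring⟩
    · have h1 : |z i₀| ≤ ‖z‖ := by
        have := norm_le_pi_norm z i₀
        rwa [Real.norm_eq_abs] at this
      have h2 : (n : ℝ) - |x₀ i₀| ≤ |z i₀| := by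
        rw [hzcoord i₀]
        have := abs_add_le (x₀ i₀) ((n:ℝ) * ((w i₀ : ℤ) : ℝ))
        have h3 : (n:ℝ) ≤ |(n:ℝ) * ((w i₀ : ℤ) : ℝ)| := by
          rw [abs_mul, abs_of_nonneg (Nat.cast_nonneg n)]
          nlinarith [Nat.cast_nonneg (α := ℝ) n]
        have h4 : |(n:ℝ) * ((w i₀ : ℤ) : ℝ)| - |x₀ i₀| ≤ |x₀ i₀ + (n:ℝ) * ((w i₀:ℤ):ℝ)| := by
          have := abs_sub_abs_le_abs_sub ((n:ℝ) * ((w i₀ : ℤ) : ℝ)) (-(x₀ i₀))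
          simp only [abs_neg, sub_neg_eq_add] at this
          calc |(n:ℝ) * ((w i₀:ℤ):ℝ)| - |x₀ i₀| ≤ |(n:ℝ) * ((w i₀:ℤ):ℝ) + x₀ i₀| := this
            _ = |x₀ i₀ + (n:ℝ) * ((w i₀:ℤ):ℝ)| := by rw [add_comm]
        linarith
      linarith
  · -- irrational direction case
    set α : ℝ := v 1 / v 0 with hα
    obtain ⟨m₀, j, hm₀, hγne, hγlt⟩ := irrational_small_step hirr hr
    set γ : ℝ := (m₀ : ℝ) * α - j with hγ
    set ε : ℤ := if 0 < v 0 then 1 else -1 with hε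
    have hεv : 0 < (ε : ℝ) * v 0 := by
      rcases lt_or_gt_of_ne h00 with h | h
      · rw [hε, if_neg (by linarith)]; push_cast; nlinarith
      · rw [hε, if_pos h]; push_cast; linarith
    have hε2 : (ε : ℝ) * (ε : ℝ) = 1 := by
      rcases ite_eq_or_eq (0 < v 0) (1:ℤ) (-1) with h | h <;>
        rw [hε, h] <;> push_cast <;> ring
    have hεne : (ε : ℝ) ≠ 0 := by
      intro h
      rw [h, zero_mul] at hεv
      exact lt_irrefl 0 hεv
    set β₀ : ℝ := c 1 - c 0 * α with hβ₀
    set γ' : ℝ := (ε : ℝ) * γ with hγ'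
    have hγ'ne : γ' ≠ 0 := mul_ne_zero hεne hγne
    have hγ'lt : |γ'| < r := by
      rw [hγ', abs_mul]
      have : |(ε:ℝ)| = 1 := by
        rcases ite_eq_or_eq (0 < v 0) (1:ℤ) (-1) with h | h <;> rw [hε, h] <;> simp
      rw [this, one_mul]
      exact hγlt
    obtain ⟨N, hN⟩ := exists_nat_gt (|c 0| + |R| + 1)
    obtain ⟨k, M, hkN, hkM⟩ := walk_any (β := β₀) hγ'ne N
    have hklarge : |c 0| + |R| + 1 < (k : ℝ) := by
      calc |c 0| + |R| + 1 < (N : ℝ) := hN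
        _ ≤ (k : ℝ) := by exact_mod_cast hkN
    set n : ℤ := ε * (k * m₀) with hn
    have hkm : (k : ℝ) ≤ (k : ℝ) * (m₀ : ℝ) := by
      nlinarith [Nat.cast_nonneg (α := ℝ) k, (by exact_mod_cast hm₀ : (1:ℝ) ≤ (m₀:ℝ))]
    have hnabs : (k : ℝ) ≤ |((n:ℤ) : ℝ)| := by
      rw [hn]
      push_cast
      rw [abs_mul]
      have : |(ε:ℝ)| = 1 := by
        rcases ite_eq_or_eq (0 < v 0) (1:ℤ) (-1) with h | h <;> rw [hε, h] <;> simp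
      rw [this, one_mul, abs_of_nonneg (by positivity)]
      exact hkm
    set t : ℝ := (((n:ℤ):ℝ) - c 0) / v 0 with ht
    have htnn : 0 ≤ t := by
      rw [ht]
      rw [show (((n:ℤ):ℝ) - c 0) / v 0 = ((ε:ℝ) * (((n:ℤ):ℝ) - c 0)) / ((ε:ℝ) * v 0) by
        rw [mul_div_mul_left _ _ hεne]]
      apply div_nonneg _ hεv.le
      have : (ε:ℝ) * ((n:ℤ):ℝ) = (k:ℝ) * (m₀:ℝ) := by
        rw [hn]; push_cast; linear_combination ((k:ℝ) * (m₀:ℝ)) * hε2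
      rw [mul_sub, this]
      have habsR := abs_nonneg R
      have hc0 : (ε:ℝ) * c 0 ≤ |c 0| := by
        calc (ε:ℝ) * c 0 ≤ |(ε:ℝ) * c 0| := le_abs_self _
          _ = |c 0| := by
            rw [abs_mul]
            have : |(ε:ℝ)| = 1 := by
              rcases ite_eq_or_eq (0 < v 0) (1:ℤ) (-1) with h | h <;> rw [hε, h] <;> simp
            rw [this, one_mul]
      linarith
    -- the candidate lattice point
    set z : Fin 2 → ℝ := ![((n:ℤ):ℝ), ((M + ε * (k:ℤ) * j : ℤ) : ℝ)] with hzdef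
    have hcoord1 : c 1 + t * v 1 = β₀ + (k:ℝ) * γ' + (ε:ℝ) * (k:ℝ) * (j:ℝ) := by
      have hv1 : v 1 = α * v 0 := by
        rw [hα, div_mul_cancel₀ _ h00]
      have htv : t * v 1 = (((n:ℤ):ℝ) - c 0) * α := by
        rw [ht, hv1]
        field_simp
      have hncast : ((n:ℤ):ℝ) = (ε:ℝ) * ((k:ℝ) * (m₀:ℝ)) := by
        rw [hn]; push_cast; ring
      rw [htv, hncast, hβ₀, hγ', hγ]
      ring
    have hzball : dist z (c + t • v) < r := by
      rw [dist_pi_lt_iff hr]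
      intro i
      fin_cases i
      · show dist (z 0) (c 0 + t * v 0) < r
        have : c 0 + t * v 0 = ((n:ℤ):ℝ) := by
          rw [ht, div_mul_cancel₀ _ h00]; ring
        rw [this]
        simp [hzdef, hr]
      · show dist (z 1) (c 1 + t * v 1) < r
        rw [hcoord1]
        have hz1 : z 1 = (M:ℝ) + (ε:ℝ) * (k:ℝ) * (j:ℝ) := by
          rw [hzdef]
          show ((M + ε * (k:ℤ) * j : ℤ) : ℝ) = _
          push_cast; ring
        rw [Real.dist_eq, hz1]
        have : (M:ℝ) + (ε:ℝ)*(k:ℝ)*(j:ℝ) - (β₀ + (k:ℝ)*γ' + (ε:ℝ)*(k:ℝ)*(j:ℝ))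
            = -(β₀ + (k:ℝ)*γ' - M) := by ring
        rw [this, abs_neg]
        exact lt_trans hkM hγ'lt
    have hzK : z ∈ K := by
      have hzb : z - t • v ∈ Metric.ball c r := by
        rw [Metric.mem_ball]
        have : dist (z - t • v) c = dist z (c + t • v) := by
          rw [dist_eq_norm, dist_eq_norm]
          congr 1
          funext i
          simp only [Pi.sub_apply, Pi.add_apply, Pi.smul_apply, smul_eq_mul]
          ring
        rw [this]
        exact hzball
      have := recession_mem hKc hKconv hray (hballK hzb) htnn
      have heq : z - t • v + t • v = z := by abel
      rwa [heq] at this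
    refine ⟨z, ⟨hzK, fun i => ?_⟩, ?_⟩
    · fin_cases i
      · exact ⟨n, rfl⟩
      · exact ⟨M + ε * (k:ℤ) * j, rfl⟩
    · have h1 : |z 0| ≤ ‖z‖ := by
        have := norm_le_pi_norm z 0
        rwa [Real.norm_eq_abs] at this
      have h2 : z 0 = ((n:ℤ):ℝ) := rfl
      calc R ≤ |R| := le_abs_self R
        _ < (k:ℝ) := by linarith [abs_nonneg (c 0)]
        _ ≤ |z 0| := by rw [h2]; exact hnabs
        _ ≤ ‖z‖ := h1
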